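/- arXiv:2303.03861 — 4 statements merged into one kernel-verified Lean document; each statement's English description precedes it below -/
import Mathlib

section
/- Let V be a vector space over a field, W a subspace, and S(W) a subsemigroup of L(W). Then L_{S(W)}(V) is an inverse semigroup if and only if S(W) is an inverse semigroup and either W = V or dim(V) = 1. -/
open Set

/-- `S` is a subsemigroup of `L(M)` (closed under composition). -/
def LIsSubsemigroup {K M : Type*} [Field K] [AddCommGroup M] [Module K M]
    (S : Set (M →ₗ[K] M)) : Prop :=
  ∀ a ∈ S, ∀ b ∈ S, a ∘ₗ b ∈ S

/-- `S` is a subgroup of `Aut(M)`. -/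
def LIsSubgroupOfAut {K M : Type*} [Field K] [AddCommGroup M] [Module K M]
    (S : Set (M →ₗ[K] M)) : Prop :=
  LIsSubsemigroup S ∧ (∀ a ∈ S, Function.Bijective a) ∧ (LinearMap.id ∈ S) ∧
    ∀ a ∈ S, ∃ b ∈ S, a ∘ₗ b = LinearMap.id ∧ b ∘ₗ a = LinearMap.id

/-- `S` is a regular semigroup of linear maps: `∀ a ∈ S, ∃ b ∈ S, aba = a`
(composed left to right, i.e. `x ↦ a (b (a x))`). -/
def LIsRegularOn {K M : Type*} [Field K] [AddCommGroup M] [Module K M]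
    (S : Set (M →ₗ[K] M)) : Prop :=
  ∀ a ∈ S, ∃ b ∈ S, a ∘ₗ b ∘ₗ a = a

/-- `S` is an inverse semigroup of linear maps. -/
def LIsInverseOn {K M : Type*} [Field K] [AddCommGroup M] [Module K M]
    (S : Set (M →ₗ[K] M)) : Prop :=
  ∀ a ∈ S, ∃! b, b ∈ S ∧ a ∘ₗ b ∘ₗ a = a ∧ b ∘ₗ a ∘ₗ b = b

/-- `u` is a unit of the linear monoid `S`. -/
def LIsUnitOn {K M : Type*} [Field K] [AddCommGroup M] [Module K M]
    (S : Set (M →ₗ[K] M)) (u : M →ₗ[K] M) : Prop :=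
  u ∈ S ∧ ∃ v ∈ S, u ∘ₗ v = LinearMap.id ∧ v ∘ₗ u = LinearMap.id

/-- `a` is a unit-regular element of `S`. -/
def LUnitRegularElem {K M : Type*} [Field K] [AddCommGroup M] [Module K M]
    (S : Set (M →ₗ[K] M)) (a : M →ₗ[K] M) : Prop :=
  ∃ u, LIsUnitOn S u ∧ a ∘ₗ u ∘ₗ a = a

/-- `S` is a unit-regular linear monoid. -/
def LIsUnitRegularOn {K M : Type*} [Field K] [AddCommGroup M] [Module K M]
    (S : Set (M →ₗ[K] M)) : Prop :=
  ∀ a ∈ S, LUnitRegularElem S a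

/-- `G` is a subgroup contained in the semigroup `S` of linear maps. -/
def LIsSubgroupIn {K M : Type*} [Field K] [AddCommGroup M] [Module K M]
    (S G : Set (M →ₗ[K] M)) : Prop :=
  G ⊆ S ∧ (∀ a ∈ G, ∀ b ∈ G, a ∘ₗ b ∈ G) ∧
    ∃ e ∈ G, (∀ a ∈ G, a ∘ₗ e = a ∧ e ∘ₗ a = a) ∧
      ∀ a ∈ G, ∃ b ∈ G, a ∘ₗ b = e ∧ b ∘ₗ a = e

/-- `S` is a completely regular semigroup of linear maps: every element
belongs to a subgroup of `S`. -/
def LIsCompletelyRegularOn {K M : Type*} [Field K] [AddCommGroup M] [Module K M]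
    (S : Set (M →ₗ[K] M)) : Prop :=
  ∀ a ∈ S, ∃ G, LIsSubgroupIn S G ∧ a ∈ G

/-- The semigroup `L_{S(W)}(V)` of all linear self-maps of `V` that leave `W`
invariant and whose restriction to `W` lies in `S`. -/
def LSemi {K V : Type*} [Field K] [AddCommGroup V] [Module K V] (W : Submodule K V)
    (S : Set (W →ₗ[K] W)) : Set (V →ₗ[K] V) :=
  {f | ∃ h : ∀ x ∈ W, f x ∈ W, f.restrict h ∈ S}

section Helpers
variable {K V : Type*} [Field K] [AddCommGroup V] [Module K V] {W : Submodule K V}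

/-- Extension of `t : W →ₗ W` along a retraction `q : V →ₗ W`. -/
noncomputable def Eext (W : Submodule K V) (q : V →ₗ[K] W) (t : W →ₗ[K] W) : V →ₗ[K] V :=
  W.subtype ∘ₗ t ∘ₗ q

lemma Eext_maps (q : V →ₗ[K] W) (t : W →ₗ[K] W) : ∀ x ∈ W, Eext W q t x ∈ W :=
  fun x _ => (t (q x)).2

lemma Eext_apply_mem (q : V →ₗ[K] W) (hq : q ∘ₗ W.subtype = LinearMap.id)
    (t : W →ₗ[K] W) (x : W) : Eext W q t (x : V) = (t x : V) := by
  have := LinearMap.congr_fun hq x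
  simp only [LinearMap.comp_apply, Submodule.subtype_apply, LinearMap.id_apply] at this
  simp [Eext, this]

lemma Eext_restrict (q : V →ₗ[K] W) (hq : q ∘ₗ W.subtype = LinearMap.id)
    (t : W →ₗ[K] W) : (Eext W q t).restrict (Eext_maps q t) = t := by
  ext x
  simp only [LinearMap.restrict_coe_apply]
  exact Eext_apply_mem q hq t x

lemma Eext_mem_LSemi {S : Set (W →ₗ[K] W)} (q : V →ₗ[K] W)
    (hq : q ∘ₗ W.subtype = LinearMap.id) {t : W →ₗ[K] W} (ht : t ∈ S) :
    Eext W q t ∈ LSemi W S :=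
  ⟨Eext_maps q t, by rw [Eext_restrict q hq]; exact ht⟩

lemma Eext_comp (q q' : V →ₗ[K] W) (hq : q ∘ₗ W.subtype = LinearMap.id)
    (t t' : W →ₗ[K] W) : Eext W q t ∘ₗ Eext W q' t' = Eext W q' (t ∘ₗ t') := by
  ext x
  exact Eext_apply_mem q hq t (t' (q' x))

lemma restrict_pinv {a b : V →ₗ[K] V} (ha : ∀ x ∈ W, a x ∈ W) (hb : ∀ x ∈ W, b x ∈ W)
    (h1 : a ∘ₗ b ∘ₗ a = a) :
    (a.restrict ha) ∘ₗ (b.restrict hb) ∘ₗ (a.restrict ha) = a.restrict ha := by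
  ext x
  have := LinearMap.congr_fun h1 (x : V)
  simp only [LinearMap.comp_apply] at this
  simp only [LinearMap.comp_apply, LinearMap.restrict_coe_apply]
  exact this

/-- A functional vanishing on a proper subspace and taking value 1 somewhere. -/
lemma exists_functional (hW : W ≠ ⊤) :
    ∃ φ : V →ₗ[K] K, (∀ x ∈ W, φ x = 0) ∧ ∃ x, φ x = 1 := by
  haveI : Nontrivial (V ⧸ W) := Submodule.Quotient.nontrivial_iff.mpr hW
  let B := Module.Basis.ofVectorSpace K (V ⧸ W)
  obtain ⟨i⟩ := B.index_nonempty
  refine ⟨(B.coord i) ∘ₗ W.mkQ, fun x hx => ?_, ?_⟩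
  · simp [(Submodule.Quotient.mk_eq_zero _).mpr hx]
  · obtain ⟨x, hx⟩ := W.mkQ_surjective (B i)
    exact ⟨x, by simp [hx]⟩

/-- Key negative lemma: if `S` contains a nonzero inverse pair and `W ≠ ⊤`,
then `LSemi W S` is not an inverse semigroup. -/
lemma not_inverse_B {S : Set (W →ₗ[K] W)} (hW : W ≠ ⊤) {s t : W →ₗ[K] W}
    (hs : s ∈ S) (ht : t ∈ S) (hst : s ∘ₗ t ∘ₗ s = s) (hts : t ∘ₗ s ∘ₗ t = t)
    (ht0 : t ≠ 0) : ¬ LIsInverseOn (LSemi W S) := by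
  intro h
  obtain ⟨U, hU⟩ := W.exists_isCompl
  set q : V →ₗ[K] W := W.linearProjOfIsCompl U hU with hqdef
  have hq : q ∘ₗ W.subtype = LinearMap.id := Submodule.linearProjOfIsCompl_comp_subtype hU
  obtain ⟨φ, hφ0, x₀, hφ1⟩ := exists_functional hW
  obtain ⟨w₀, hw₀⟩ : ∃ w₀ : W, t w₀ ≠ 0 := by
    by_contra hc
    push_neg at hc
    exact ht0 (LinearMap.ext hc)
  set q' : V →ₗ[K] W := q + φ.smulRight w₀ with hq'def
  have hq' : q' ∘ₗ W.subtype = LinearMap.id := by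
    ext x
    have h1 := LinearMap.congr_fun hq x
    simp only [LinearMap.comp_apply, Submodule.subtype_apply, LinearMap.id_apply] at h1 ⊢
    simp [hq'def, hφ0 (x : V) x.2, h1]
  obtain ⟨c, -, hcu⟩ := h (Eext W q s) (Eext_mem_LSemi q hq hs)
  have hb : Eext W q t = c := by
    refine hcu _ ⟨Eext_mem_LSemi q hq ht, ?_, ?_⟩
    · rw [Eext_comp q q hq t s, Eext_comp q q hq s (t ∘ₗ s), hst]
    · rw [Eext_comp q q hq s t, Eext_comp q q hq t (s ∘ₗ t), hts]
  have hb' : Eext W q' t = c := by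
    refine hcu _ ⟨Eext_mem_LSemi q' hq' ht, ?_, ?_⟩
    · rw [Eext_comp q' q hq' t s, Eext_comp q q hq s (t ∘ₗ s), hst]
    · rw [Eext_comp q q' hq s t, Eext_comp q' q' hq' t (s ∘ₗ t), hts]
  have heq : Eext W q t = Eext W q' t := hb.trans hb'.symm
  have := LinearMap.congr_fun heq x₀
  simp only [Eext, LinearMap.comp_apply, Submodule.subtype_apply, hq'def,
    LinearMap.add_apply, LinearMap.smulRight_apply, hφ1, one_smul, map_add] at this
  exact hw₀ (Submodule.coe_eq_zero.mp (left_eq_add.mp this))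

/-- Key negative lemma for the degenerate case: `0 ∈ S` and some intermediate
proper nonzero subspace exists. -/
lemma not_inverse_A {S : Set (W →ₗ[K] W)} (h0 : (0 : W →ₗ[K] W) ∈ S)
    (W₁ : Submodule K V) (hWW₁ : W ≤ W₁) (h₁b : W₁ ≠ ⊥) (h₁t : W₁ ≠ ⊤) :
    ¬ LIsInverseOn (LSemi W S) := by
  intro h
  obtain ⟨U, hU⟩ := W₁.exists_isCompl
  set a : V →ₗ[K] V := U.subtype ∘ₗ (U.linearProjOfIsCompl W₁ hU.symm) with hadef
  have haW₁ : ∀ x ∈ W₁, a x = 0 := fun x hx => by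
    simp [hadef]; exact Submodule.projectionOnto_apply_of_mem_right hU.symm hx
  have haa : a ∘ₗ a = a := by
    ext x
    simp only [LinearMap.comp_apply, hadef, Submodule.subtype_apply]
    exact congrArg Subtype.val (Submodule.linearProjOfIsCompl_apply_left hU.symm _)
  obtain ⟨φ, hφ0, x₀, hφ1⟩ := exists_functional h₁t
  obtain ⟨w₀, hw₀mem, hw₀⟩ := (Submodule.ne_bot_iff W₁).mp h₁b
  set g : V →ₗ[K] V := W₁.subtype ∘ₗ (φ.smulRight ⟨w₀, hw₀mem⟩) with hgdef
  have hg : ∀ x, g x = φ x • w₀ := fun x => by simp [hgdef]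
  have hag : a ∘ₗ g = 0 := by
    ext x
    simp only [LinearMap.comp_apply, LinearMap.zero_apply]
    exact haW₁ _ (by rw [hg]; exact W₁.smul_mem _ hw₀mem)
  have hga : g ∘ₗ a = g := by
    ext x
    simp only [LinearMap.comp_apply]
    rw [hg, hg]
    congr 1
    have hx := Submodule.projection_add_projection_eq_self hU.symm x
    have hax : a x = x - ((W₁.linearProjOfIsCompl U hU.symm.symm) x : V) := by
      rw [hadef]
      exact eq_sub_of_add_eq hx
    rw [hax, map_sub, hφ0 _ ((W₁.linearProjOfIsCompl U hU.symm.symm) x).2, sub_zero]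
  have hmem : ∀ f : V →ₗ[K] V, (∀ x ∈ W₁, f x = 0) → f ∈ LSemi W S := by
    intro f hf
    have hWmaps : ∀ x ∈ W, f x ∈ W := fun x hx => by
      rw [hf x (hWW₁ hx)]; exact W.zero_mem
    refine ⟨hWmaps, ?_⟩
    have hr0 : f.restrict hWmaps = 0 := by
      ext x
      simp [LinearMap.restrict_coe_apply, hf _ (hWW₁ x.2)]
    rw [hr0]; exact h0
  have e1 : (a + g) ∘ₗ a = a + g := by rw [LinearMap.add_comp, haa, hga]
  have e2 : a ∘ₗ (a + g) = a := by rw [LinearMap.comp_add, haa, hag, add_zero]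
  obtain ⟨c, -, hcu⟩ := h a (hmem a haW₁)
  have hb : a = c := by
    refine hcu _ ⟨hmem a haW₁, ?_, ?_⟩ <;> rw [haa, haa]
  have hb' : a + g = c := by
    have hgW₁ : ∀ x ∈ W₁, (a + g) x = 0 := fun x hx => by
      have : g x = 0 := by rw [hg, hφ0 x hx, zero_smul]
      simp [haW₁ x hx, this]
    refine hcu _ ⟨hmem _ hgW₁, ?_, ?_⟩
    · rw [e1, e2]
    · rw [e2, e1]
  have heq : a = a + g := hb.trans hb'.symm
  have := LinearMap.congr_fun heq x₀
  simp only [LinearMap.add_apply] at this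
  have hgx : g x₀ = 0 := (left_eq_add.mp this)
  rw [hg, hφ1, one_smul] at hgx
  exact hw₀ hgx

/-- If `W = ⊤` and `S` is inverse then so is `LSemi ⊤ S`. -/
lemma inverse_top {S : Set ((⊤ : Submodule K V) →ₗ[K] (⊤ : Submodule K V))}
    (hinvS : LIsInverseOn S) : LIsInverseOn (LSemi ⊤ S) := by
  set q : V →ₗ[K] (⊤ : Submodule K V) :=
    (⊤ : Submodule K V).linearProjOfIsCompl ⊥ isCompl_top_bot with hqdef
  have hq : q ∘ₗ (⊤ : Submodule K V).subtype = LinearMap.id :=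
    Submodule.linearProjOfIsCompl_comp_subtype isCompl_top_bot
  have hcoe : ∀ x : V, ((q x : (⊤ : Submodule K V)) : V) = x := by
    intro x
    have h1 : q (((⟨x, trivial⟩ : (⊤ : Submodule K V)) : V)) = ⟨x, trivial⟩ :=
      Submodule.linearProjOfIsCompl_apply_left isCompl_top_bot _
    exact congrArg Subtype.val h1
  have hrecon : ∀ (f : V →ₗ[K] V) (hf : ∀ x ∈ (⊤ : Submodule K V), f x ∈ (⊤ : Submodule K V)),
      f = Eext ⊤ q (f.restrict hf) := by
    intro f hf
    ext x
    rw [show Eext ⊤ q (f.restrict hf) x = ((f.restrict hf) (q x) : V) from rfl,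
      LinearMap.restrict_coe_apply, hcoe]
  rintro a ⟨haW, haS⟩
  obtain ⟨t, ⟨htS, ht1, ht2⟩, htu⟩ := hinvS _ haS
  have hae : a = Eext ⊤ q (a.restrict haW) := hrecon a haW
  refine ⟨Eext ⊤ q t, ⟨Eext_mem_LSemi q hq htS, ?_, ?_⟩, ?_⟩
  · rw [hae, Eext_comp q q hq t (a.restrict haW),
      Eext_comp q q hq (a.restrict haW) (t ∘ₗ a.restrict haW), ht1]
  · rw [hae, Eext_comp q q hq (a.restrict haW) t,
      Eext_comp q q hq t (a.restrict haW ∘ₗ t), ht2]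
  · rintro c ⟨⟨hcW, hcS⟩, hc1, hc2⟩
    have h1 := restrict_pinv haW hcW hc1
    have h2 := restrict_pinv hcW haW hc2
    have hct : c.restrict hcW = t := htu _ ⟨hcS, h1, h2⟩
    rw [hrecon c hcW, hct]

end Helpers

theorem stmt16 {K V : Type*} [Field K] [AddCommGroup V] [Module K V]
    (W : Submodule K V) (S : Set (W →ₗ[K] W)) (hSne : S.Nonempty)
    (hS : LIsSubsemigroup S) :
    LIsInverseOn (LSemi W S) ↔
      (LIsInverseOn S ∧ (W = ⊤ ∨ Module.rank K V = 1)) := by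
  constructor
  · intro h
    have hinvS : LIsInverseOn S := by
      intro s hs
      obtain ⟨U, hU⟩ := W.exists_isCompl
      set q : V →ₗ[K] W := W.linearProjOfIsCompl U hU with hqdef
      have hq : q ∘ₗ W.subtype = LinearMap.id := Submodule.linearProjOfIsCompl_comp_subtype hU
      obtain ⟨b, ⟨⟨hbW, hbS⟩, hb1, hb2⟩, hbu⟩ := h _ (Eext_mem_LSemi q hq hs)
      refine ⟨b.restrict hbW, ⟨hbS, ?_, ?_⟩, ?_⟩
      · have h1 := restrict_pinv (Eext_maps q s) hbW hb1
        rwa [Eext_restrict q hq] at h1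
      · have h2 := restrict_pinv hbW (Eext_maps q s) hb2
        rwa [Eext_restrict q hq] at h2
      · rintro t' ⟨ht'S, h1, h2⟩
        have hbeq : Eext W q t' = b := by
          refine hbu _ ⟨Eext_mem_LSemi q hq ht'S, ?_, ?_⟩
          · rw [Eext_comp q q hq t' s, Eext_comp q q hq s (t' ∘ₗ s), h1]
          · rw [Eext_comp q q hq s t', Eext_comp q q hq t' (s ∘ₗ t'), h2]
        refine LinearMap.ext fun x => Subtype.ext ?_
        rw [LinearMap.restrict_coe_apply, ← hbeq]
        exact (Eext_apply_mem q hq t' x).symm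
    refine ⟨hinvS, ?_⟩
    by_contra hc
    push_neg at hc
    obtain ⟨hWt, hr⟩ := hc
    by_cases hnz : ∃ s ∈ S, s ≠ 0
    · obtain ⟨s, hs, hs0⟩ := hnz
      obtain ⟨t, ⟨htS, h1, h2⟩, -⟩ := hinvS s hs
      have ht0 : t ≠ 0 := by
        rintro rfl
        apply hs0
        rw [← h1]
        simp
      exact not_inverse_B hWt hs htS h1 h2 ht0 h
    · push_neg at hnz
      obtain ⟨s, hs⟩ := hSne
      have h0S : (0 : W →ₗ[K] W) ∈ S := by rw [← hnz s hs]; exact hs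
      by_cases hWb : W = ⊥
      · subst hWb
        have hnt : Nontrivial V := by
          rcases subsingleton_or_nontrivial V with hsub | hn
          · exact absurd (Subsingleton.elim (⊥ : Submodule K V) ⊤) hWt
          · exact hn
        obtain ⟨v, hv⟩ := exists_ne (0 : V)
        refine absurd h (not_inverse_A h0S (Submodule.span K {v}) bot_le ?_ ?_)
        · simpa [Submodule.span_singleton_eq_bot] using hv
        · intro hsp
          apply hr
          have hle : Module.rank K V ≤ 1 := by
            rw [← rank_top K V, ← hsp]
            simpa using rank_span_le (R := K) ({v} : Set V)
          have hge : 1 ≤ Module.rank K V := Cardinal.one_le_iff_pos.mpr rank_pos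
          exact le_antisymm hle hge
      · exact absurd h (not_inverse_A h0S W le_rfl hWb hWt)
  · rintro ⟨hinvS, hcase⟩
    rcases hcase with rfl | hrank
    · exact inverse_top hinvS
    · by_cases hWtop : W = ⊤
      · subst hWtop
        exact inverse_top hinvS
      · haveI : FiniteDimensional K V := Module.finite_of_rank_eq_one hrank
        have hfr : Module.finrank K V = 1 := Module.rank_eq_one_iff_finrank_eq_one.mp hrank
        have hWbot : W = ⊥ := by
          by_contra hWb
          have hlt := Submodule.finrank_lt (K := K) (V := V) hWtop
          rw [hfr] at hlt
          exact hWb (Submodule.finrank_eq_zero.mp (Nat.lt_one_iff.mp hlt))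
        subst hWbot
        intro a _
        have hall : ∀ f : V →ₗ[K] V, f ∈ LSemi ⊥ S := by
          intro f
          have hmaps : ∀ x ∈ (⊥ : Submodule K V), f x ∈ (⊥ : Submodule K V) := by
            intro x hx
            rw [Submodule.mem_bot] at hx ⊢
            rw [hx, map_zero]
          refine ⟨hmaps, ?_⟩
          obtain ⟨s, hs⟩ := hSne
          rwa [Subsingleton.elim (f.restrict hmaps) s]
        by_cases ha0 : a = 0
        · subst ha0
          refine ⟨0, ⟨hall 0, by simp, by simp⟩, ?_⟩
          rintro c ⟨-, -, h2⟩
          rw [LinearMap.zero_comp, LinearMap.comp_zero] at h2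
          exact h2.symm
        · have hker : LinearMap.ker a = ⊥ := by
            by_contra hk
            have h1 : LinearMap.ker a ≠ ⊤ := fun hh => ha0 (LinearMap.ker_eq_top.mp hh)
            have hlt := Submodule.finrank_lt (K := K) (V := V) h1
            rw [hfr] at hlt
            exact hk (Submodule.finrank_eq_zero.mp (Nat.lt_one_iff.mp hlt))
          have hinj : Function.Injective a := LinearMap.ker_eq_bot.mp hker
          have hsurj : Function.Surjective a := (LinearMap.injective_iff_surjective).mp hinj
          set e := LinearEquiv.ofBijective a ⟨hinj, hsurj⟩ with hedef
          have hab : a ∘ₗ (e.symm : V →ₗ[K] V) = LinearMap.id := by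
            ext x
            simp only [LinearMap.comp_apply, LinearMap.id_apply, LinearEquiv.coe_coe]
            exact e.apply_symm_apply x
          have hba : (e.symm : V →ₗ[K] V) ∘ₗ a = LinearMap.id := by
            ext x
            simp only [LinearMap.comp_apply, LinearMap.id_apply, LinearEquiv.coe_coe]
            exact e.symm_apply_apply x
          refine ⟨(e.symm : V →ₗ[K] V), ⟨hall _, ?_, ?_⟩, ?_⟩
          · rw [hba, LinearMap.comp_id]
          · rw [hab, LinearMap.comp_id]
          · rintro c ⟨-, h1, -⟩
            ext x
            have hc := LinearMap.congr_fun h1 (e.symm x)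
            simp only [LinearMap.comp_apply] at hc
            have hax : a (e.symm x) = x := by
              have h3 := LinearMap.congr_fun hab x
              simpa using h3
            rw [hax] at hc
            show c x = (e.symm : V →ₗ[K] V) x
            apply hinj
            rw [hc]
            simpa using hax.symm
end

section
/- Let V be a vector space over a field. The semigroup L(V) of all linear self-maps of V under composition is an inverse semigroup if and only if dim(V) ≤ 1. -/
open Set

theorem stmt17 {K V : Type*} [Field K] [AddCommGroup V] [Module K V] :
    (∀ a : V →ₗ[K] V, ∃! b : V →ₗ[K] V, a ∘ₗ b ∘ₗ a = a ∧ b ∘ₗ a ∘ₗ b = b) ↔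
      Module.rank K V ≤ 1 := by
  classical
  constructor
  · intro h
    by_contra hr
    push_neg at hr
    set B := Module.Basis.ofVectorSpace K V with hB
    have hcard : 1 < Cardinal.mk (Module.Basis.ofVectorSpaceIndex K V) := by
      rw [B.mk_eq_rank'']; exact hr
    rw [Cardinal.one_lt_iff_nontrivial] at hcard
    obtain ⟨i, j, hij⟩ := hcard
    let a : V →ₗ[K] V := B.constr K (fun k => if k = i then B i else 0)
    let b' : V →ₗ[K] V := B.constr K
      (fun k => if k = i then B i else if k = j then -(B i) else 0)
    have habk : ∀ k, a (B k) = if k = i then B i else 0 := fun k =>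
      B.constr_basis K _ k
    have hb'k : ∀ k, b' (B k) = if k = i then B i else if k = j then -(B i) else 0 :=
      fun k => B.constr_basis K _ k
    have hai : a (B i) = B i := by rw [habk, if_pos rfl]
    have hb'i : b' (B i) = B i := by rw [hb'k, if_pos rfl]
    have haj : a (B j) = 0 := by rw [habk, if_neg hij.symm]
    have hb'j : b' (B j) = -(B i) := by rw [hb'k, if_neg hij.symm, if_pos rfl]
    have key1 : a ∘ₗ a ∘ₗ a = a := by
      apply B.ext; intro k
      simp only [LinearMap.comp_apply, habk]
      by_cases hk : k = i <;> simp [hk, habk]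
    have key2 : a ∘ₗ b' ∘ₗ a = a := by
      apply B.ext; intro k
      simp only [LinearMap.comp_apply, habk]
      by_cases hk : k = i <;> simp [hk, hb'i, habk]
    have key3 : b' ∘ₗ a ∘ₗ b' = b' := by
      apply B.ext; intro k
      simp only [LinearMap.comp_apply, hb'k]
      by_cases hk : k = i
      · simp [hk, hai, hb'i]
      · by_cases hkj : k = j <;> simp [hk, hkj, hai, hb'i, habk, hij.symm]
    obtain ⟨b, _, huniq⟩ := h a
    have h1 : a = b := huniq a ⟨key1, key1⟩
    have h2 : b' = b := huniq b' ⟨key2, key3⟩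
    have hab : a = b' := h1.trans h2.symm
    have : (0 : V) = -(B i) := by rw [← haj, ← hb'j, hab]
    exact B.ne_zero i (by simpa using this.symm)
  · intro hr a
    obtain ⟨v₀, hv₀⟩ := rank_le_one_iff.mp hr
    obtain ⟨c, hc⟩ := hv₀ (a v₀)
    have ha : ∀ v, a v = c • v := by
      intro v
      obtain ⟨r, hrv⟩ := hv₀ v
      rw [← hrv, map_smul, ← hc, smul_comm]
    by_cases hc0 : c = 0
    · refine ⟨0, ⟨?_, ?_⟩, ?_⟩
      · apply LinearMap.ext; intro v; simp [ha, hc0]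
      · apply LinearMap.ext; intro v; simp
      · rintro b ⟨-, hb2⟩
        apply LinearMap.ext; intro v
        have h2 := congrArg (fun f : V →ₗ[K] V => f v) hb2
        simp only [LinearMap.comp_apply] at h2
        rw [ha, hc0, zero_smul, map_zero] at h2
        simpa using h2.symm
    · refine ⟨c⁻¹ • LinearMap.id, ⟨?_, ?_⟩, ?_⟩
      · apply LinearMap.ext; intro v
        simp [ha, smul_smul, mul_comm, hc0, mul_inv_cancel₀]
      · apply LinearMap.ext; intro v
        simp [ha, smul_smul, hc0, inv_mul_cancel₀, mul_comm, mul_assoc]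
      · rintro b ⟨hb1, -⟩
        apply LinearMap.ext; intro v
        have h1 := congrArg (fun f : V →ₗ[K] V => f v) hb1
        simp only [LinearMap.comp_apply, ha, map_smul] at h1
        have h2 : c • c • b v = c • v := by
          simpa [smul_smul, mul_comm] using h1
        have hbv : c • b v = v := by
          have h3 := congrArg (fun x => c⁻¹ • x) h2
          simpa [smul_smul, hc0, inv_mul_cancel₀] using h3
        calc b v = c⁻¹ • (c • b v) := by
              rw [smul_smul, inv_mul_cancel₀ hc0, one_smul]
          _ = (c⁻¹ • LinearMap.id) v := by rw [hbv]; simp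
end

section
/- Let V be a vector space over a field, W a subspace, and S(W) a subsemigroup of L(W). Then L_{S(W)}(V) is a completely regular semigroup if and only if S(W) is completely regular and either (i) W = V, or (ii) dim(V/W) = 1 and S(W) is a subgroup of Aut(W). -/
open Set

section funct
variable {K : Type*} [Field K]

lemma exists_functional_s18 {M : Type*} [AddCommGroup M] [Module K M]
    (W' : Submodule K M) (y : M) (hy : y ∉ W') :
    ∃ ψ : M →ₗ[K] K, (∀ w ∈ W', ψ w = 0) ∧ ψ y = 1 := by
  have hq : W'.mkQ y ≠ 0 := by
    simpa [Submodule.Quotient.mk_eq_zero] using hy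
  obtain ⟨φ, hφ⟩ : ∃ φ : Module.Dual K (M ⧸ W'), φ (W'.mkQ y) ≠ 0 := by
    by_contra h; push_neg at h
    exact hq ((Module.forall_dual_apply_eq_zero_iff K _).mp h)
  refine ⟨(φ (W'.mkQ y))⁻¹ • (φ ∘ₗ W'.mkQ), ?_, ?_⟩
  · intro w hw
    simp [Submodule.mkQ_apply, (Submodule.Quotient.mk_eq_zero _).mpr hw]
  · simp only [LinearMap.smul_apply, LinearMap.coe_comp, Function.comp_apply, smul_eq_mul]
    exact inv_mul_cancel₀ hφ

lemma span_of_rank_one {M : Type*} [AddCommGroup M] [Module K M]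
    (hr : Module.rank K M = 1) {v : M} (hv : v ≠ 0) (z : M) : ∃ c : K, z = c • v := by
  by_contra h; push_neg at h
  have hli : LinearIndependent K ![z, v] :=
    linearIndependent_fin2.mpr ⟨hv, fun a ha => h a ha.symm⟩
  have h2 := hli.cardinal_lift_le_rank
  rw [hr] at h2
  simp [Cardinal.mk_fintype] at h2

end funct

section helpers
variable {K V : Type*} [Field K] [AddCommGroup V] [Module K V]

lemma my_restrict_comp {W : Submodule K V} {a b : V →ₗ[K] V}
    (ha : ∀ x ∈ W, a x ∈ W) (hb : ∀ x ∈ W, b x ∈ W)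
    (hab : ∀ x ∈ W, (a ∘ₗ b) x ∈ W) :
    (a ∘ₗ b).restrict hab = (a.restrict ha) ∘ₗ (b.restrict hb) := by
  ext x; rfl

lemma creg_key {M : Type*} [AddCommGroup M] [Module K M] {T : Set (M →ₗ[K] M)}
    (hT : LIsCompletelyRegularOn T) {f : M →ₗ[K] M} (hf : f ∈ T) :
    ∃ h ∈ T, f ∘ₗ h ∘ₗ f = f ∧ f ∘ₗ h = h ∘ₗ f := by
  obtain ⟨G, ⟨hGT, hGc, e, heG, hid, hinv⟩, hfG⟩ := hT f hf
  obtain ⟨b, hbG, hfb, hbf⟩ := hinv f hfG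
  refine ⟨b, hGT hbG, ?_, by rw [hfb, hbf]⟩
  rw [hbf]; exact (hid f hfG).1

lemma L_restrict {W : Submodule K V} (π : V →ₗ[K] W) (hπ : ∀ w : W, π ↑w = w)
    (t : W →ₗ[K] W) :
    ∃ h : ∀ x ∈ W, (W.subtype ∘ₗ t ∘ₗ π) x ∈ W,
      (W.subtype ∘ₗ t ∘ₗ π).restrict h = t := by
  refine ⟨fun x hx => (t (π x)).2, ?_⟩
  ext x
  show ((t (π ↑x) : W) : V) = ↑(t x)
  congr 1
  exact congrArg t (hπ x)

lemma L_mem {W : Submodule K V} {S : Set (W →ₗ[K] W)} (π : V →ₗ[K] W)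
    (hπ : ∀ w : W, π ↑w = w) {t : W →ₗ[K] W} (ht : t ∈ S) :
    W.subtype ∘ₗ t ∘ₗ π ∈ LSemi W S := by
  obtain ⟨h, hr⟩ := L_restrict π hπ t
  exact ⟨h, by rw [hr]; exact ht⟩

lemma L_comp {W : Submodule K V} (π : V →ₗ[K] W) (hπ : ∀ w : W, π ↑w = w)
    (t u : W →ₗ[K] W) :
    (W.subtype ∘ₗ t ∘ₗ π) ∘ₗ (W.subtype ∘ₗ u ∘ₗ π) = W.subtype ∘ₗ (t ∘ₗ u) ∘ₗ π := by
  ext x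
  simp [hπ]

lemma lift_group {W : Submodule K V} {S : Set (W →ₗ[K] W)} (π : V →ₗ[K] W)
    (hπ : ∀ w : W, π ↑w = w) {G : Set (W →ₗ[K] W)} (hG : LIsSubgroupIn S G) :
    LIsSubgroupIn (LSemi W S) ((fun t => W.subtype ∘ₗ t ∘ₗ π) '' G) := by
  obtain ⟨hGS, hGc, e, heG, hid, hinv⟩ := hG
  refine ⟨?_, ?_, ?_⟩
  · rintro _ ⟨t, htG, rfl⟩
    exact L_mem π hπ (hGS htG)
  · rintro _ ⟨t, htG, rfl⟩ _ ⟨u, huG, rfl⟩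
    exact ⟨t ∘ₗ u, hGc t htG u huG, (L_comp π hπ t u).symm⟩
  · refine ⟨_, ⟨e, heG, rfl⟩, ?_, ?_⟩
    · rintro _ ⟨t, htG, rfl⟩
      constructor
      · rw [L_comp π hπ, (hid t htG).1]
      · rw [L_comp π hπ, (hid t htG).2]
    · rintro _ ⟨t, htG, rfl⟩
      obtain ⟨b, hbG, hb1, hb2⟩ := hinv t htG
      exact ⟨_, ⟨b, hbG, rfl⟩, by rw [L_comp π hπ, hb1], by rw [L_comp π hπ, hb2]⟩

end helpers

section Fsec
variable {K V : Type*} [Field K] [AddCommGroup V] [Module K V]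

/-- auxiliary map construction -/
def Fmap (W : Submodule K V) (s : W →ₗ[K] W) (π : V →ₗ[K] W)
    (ψ : (V ⧸ W) →ₗ[K] K) (c : V) : V →ₗ[K] V :=
  W.subtype ∘ₗ s ∘ₗ π + (ψ ∘ₗ W.mkQ).smulRight c

lemma Fmap_apply (W : Submodule K V) (s : W →ₗ[K] W) (π : V →ₗ[K] W)
    (ψ : (V ⧸ W) →ₗ[K] K) (c : V) (x : V) :
    Fmap W s π ψ c x = ↑(s (π x)) + ψ (Submodule.Quotient.mk x) • c := rfl

lemma Fmap_apply_mem (W : Submodule K V) (s : W →ₗ[K] W) (π : V →ₗ[K] W)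
    (ψ : (V ⧸ W) →ₗ[K] K) (c : V) {x : V} (hx : x ∈ W) :
    Fmap W s π ψ c x = ↑(s (π x)) := by
  rw [Fmap_apply]
  rw [show (Submodule.Quotient.mk x : V ⧸ W) = 0 from (Submodule.Quotient.mk_eq_zero _).mpr hx]
  simp

lemma Fmap_restrict (W : Submodule K V) (s : W →ₗ[K] W) (π : V →ₗ[K] W)
    (hπ : ∀ w : W, π ↑w = w) (ψ : (V ⧸ W) →ₗ[K] K) (c : V) :
    ∃ h : ∀ x ∈ W, Fmap W s π ψ c x ∈ W, (Fmap W s π ψ c).restrict h = s := by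
  have hmem : ∀ x ∈ W, Fmap W s π ψ c x ∈ W := by
    intro x hx; rw [Fmap_apply_mem W s π ψ c hx]; exact (s (π x)).2
  refine ⟨hmem, ?_⟩
  ext w
  show Fmap W s π ψ c ↑w = ↑(s w)
  rw [Fmap_apply_mem W s π ψ c w.2, hπ w]

lemma Fmap_mem {W : Submodule K V} {S : Set (W →ₗ[K] W)} {s : W →ₗ[K] W} (hs : s ∈ S)
    (π : V →ₗ[K] W) (hπ : ∀ w : W, π ↑w = w) (ψ : (V ⧸ W) →ₗ[K] K) (c : V) :
    Fmap W s π ψ c ∈ LSemi W S := by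
  obtain ⟨h, hr⟩ := Fmap_restrict W s π hπ ψ c
  exact ⟨h, by rw [hr]; exact hs⟩

lemma key_z {f h : V →ₗ[K] V} (h1 : f ∘ₗ h ∘ₗ f = f) (t : V) :
    f t = f (h (f t)) := by
  conv_lhs => rw [← h1]
  rfl

lemma key_zero {f h : V →ₗ[K] V} (h1 : f ∘ₗ h ∘ₗ f = f) (h2 : f ∘ₗ h = h ∘ₗ f)
    (t : V) (h0 : f (f t) = 0) : f t = 0 := by
  have e1 := key_z h1 t
  have e2 : f (h (f t)) = h (f (f t)) := by
    have := LinearMap.ext_iff.mp h2 (f t)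
    simpa using this
  rw [e1, e2, h0, map_zero]

lemma LSemi_comp {W : Submodule K V} {S : Set (W →ₗ[K] W)} (hS : LIsSubsemigroup S)
    {f g : V →ₗ[K] V} (hf : f ∈ LSemi W S) (hg : g ∈ LSemi W S) :
    f ∘ₗ g ∈ LSemi W S := by
  obtain ⟨hfw, hfS⟩ := hf
  obtain ⟨hgw, hgS⟩ := hg
  refine ⟨fun x hx => hfw _ (hgw x hx), ?_⟩
  rw [my_restrict_comp hfw hgw]
  exact hS _ hfS _ hgS

lemma id_restrict (W : Submodule K V) :
    (LinearMap.id : V →ₗ[K] V).restrict (fun x hx => hx) = (LinearMap.id : W →ₗ[K] W) := by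
  ext x; rfl

lemma LSemi_id {W : Submodule K V} {S : Set (W →ₗ[K] W)} (hid : LinearMap.id ∈ S) :
    LinearMap.id ∈ LSemi W S :=
  ⟨fun x hx => hx, by rw [id_restrict]; exact hid⟩

lemma restrict_eq_restrict {W : Submodule K V} {a b : V →ₗ[K] V}
    (ha : ∀ x ∈ W, a x ∈ W) (hb : ∀ x ∈ W, b x ∈ W) (hab : a = b) :
    a.restrict ha = b.restrict hb := by subst hab; rfl

lemma restrict_coe {W : Submodule K V} {a : V →ₗ[K] V} (ha : ∀ x ∈ W, a x ∈ W) (w : W) :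
    ↑(a.restrict ha w) = a ↑w := rfl

end Fsec
theorem stmt18 {K V : Type*} [Field K] [AddCommGroup V] [Module K V]
    (W : Submodule K V) (S : Set (W →ₗ[K] W)) (hSne : S.Nonempty)
    (hS : LIsSubsemigroup S) :
    LIsCompletelyRegularOn (LSemi W S) ↔
      (LIsCompletelyRegularOn S ∧
        (W = ⊤ ∨ (Module.rank K (V ⧸ W) = 1 ∧ LIsSubgroupOfAut S))) := by
  constructor
  · intro hcr
    obtain ⟨U, hU⟩ := W.exists_isCompl
    set π := W.projectionOnto U hU with hπdef
    have hπ : ∀ w : W, π ↑w = w := fun w => Submodule.projectionOnto_apply_left hU w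
    have hScr : LIsCompletelyRegularOn S := by
      intro s hs
      obtain ⟨hres, hrs⟩ := L_restrict π hπ s
      have hmem : W.subtype ∘ₗ s ∘ₗ π ∈ LSemi W S := ⟨hres, by rw [hrs]; exact hs⟩
      obtain ⟨G, ⟨hGT, hGc, e, heG, hid, hinv⟩, hmemG⟩ := hcr _ hmem
      refine ⟨{t | ∃ f ∈ G, ∃ hf : ∀ x ∈ W, f x ∈ W, f.restrict hf = t}, ⟨?_, ?_, ?_⟩, ?_⟩
      · rintro t ⟨f, hfG, hf, rfl⟩
        obtain ⟨hf', hfS⟩ := hGT hfG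
        exact hfS
      · rintro _ ⟨f, hfG, hf, rfl⟩ _ ⟨g, hgG, hg, rfl⟩
        exact ⟨f ∘ₗ g, hGc f hfG g hgG, fun x hx => hf _ (hg x hx),
          (my_restrict_comp hf hg (fun x hx => hf _ (hg x hx))).symm⟩
      · obtain ⟨he, -⟩ := hGT heG
        refine ⟨e.restrict he, ⟨e, heG, he, rfl⟩, ?_, ?_⟩
        · rintro _ ⟨f, hfG, hf, rfl⟩
          constructor
          · rw [← my_restrict_comp hf he (fun x hx => hf _ (he x hx))]
            exact restrict_eq_restrict _ _ (hid f hfG).1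
          · rw [← my_restrict_comp he hf (fun x hx => he _ (hf x hx))]
            exact restrict_eq_restrict _ _ (hid f hfG).2
        · rintro _ ⟨f, hfG, hf, rfl⟩
          obtain ⟨b, hbG, hb1, hb2⟩ := hinv f hfG
          obtain ⟨hbW, -⟩ := hGT hbG
          refine ⟨b.restrict hbW, ⟨b, hbG, hbW, rfl⟩, ?_, ?_⟩
          · rw [← my_restrict_comp hf hbW (fun x hx => hf _ (hbW x hx))]
            exact restrict_eq_restrict _ _ hb1
          · rw [← my_restrict_comp hbW hf (fun x hx => hbW _ (hf x hx))]
            exact restrict_eq_restrict _ _ hb2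
      · exact ⟨_, hmemG, hres, hrs⟩
    refine ⟨hScr, ?_⟩
    by_cases hW : W = ⊤
    · exact Or.inl hW
    right
    obtain ⟨v0, hv0⟩ : ∃ v0, v0 ∉ W := by
      by_contra h; push_neg at h; exact hW (Submodule.eq_top_iff'.mpr h)
    have hx0 : (Submodule.Quotient.mk v0 : V ⧸ W) ≠ 0 := by
      simpa [Submodule.Quotient.mk_eq_zero] using hv0
    obtain ⟨ψ0, -, hψ0⟩ := exists_functional_s18 (⊥ : Submodule K (V ⧸ W))
      (Submodule.Quotient.mk v0) (by simpa using hx0)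
    -- injectivity of every s ∈ S
    have hinj : ∀ s ∈ S, Function.Injective s := by
      intro s hs
      suffices h0 : ∀ w1 : W, s w1 = 0 → w1 = 0 by
        intro u v huv
        have h1 : s (u - v) = 0 := by rw [map_sub, huv, sub_self]
        have := h0 _ h1; rwa [sub_eq_zero] at this
      intro w1 hw1
      set c : V := ↑w1 - ↑(s (π v0)) with hc
      set f := Fmap W s π ψ0 c with hfd
      have hfmem := Fmap_mem hs π hπ ψ0 c
      obtain ⟨h, hhmem, h1, h2⟩ := creg_key hcr hfmem
      have hfv0 : f v0 = ↑w1 := by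
        rw [hfd, Fmap_apply, hψ0, one_smul, hc]; abel
      have hffv0 : f (f v0) = 0 := by
        rw [hfv0, hfd, Fmap_apply_mem W s π ψ0 c w1.2, hπ w1, hw1]
        simp
      have hz := key_zero h1 h2 v0 hffv0
      rw [hfv0] at hz
      exact Subtype.ext hz
    -- surjectivity of every s ∈ S
    have hsurj : ∀ s ∈ S, Function.Surjective s := by
      intro s hs w0
      set c : V := ↑w0 - ↑(s (π v0)) with hc
      set f := Fmap W s π ψ0 c with hfd
      have hfmem := Fmap_mem hs π hπ ψ0 c
      obtain ⟨h, hhmem, h1, h2⟩ := creg_key hcr hfmem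
      have hfv0 : f v0 = ↑w0 := by
        rw [hfd, Fmap_apply, hψ0, one_smul, hc]; abel
      obtain ⟨hhW, -⟩ := hhmem
      have hz := key_z h1 v0
      rw [hfv0] at hz
      refine ⟨⟨h ↑w0, hhW _ w0.2⟩, ?_⟩
      apply Subtype.ext
      have hfw : f ↑(⟨h ↑w0, hhW _ w0.2⟩ : W) = ↑(s ⟨h ↑w0, hhW _ w0.2⟩) := by
        rw [hfd, Fmap_apply_mem W s π ψ0 c (hhW _ w0.2)]
        exact congrArg (fun t => (↑(s t) : V)) (hπ ⟨h ↑w0, hhW _ w0.2⟩)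
      show ↑(s ⟨h ↑w0, hhW _ w0.2⟩) = (↑w0 : V)
      rw [← hfw, ← hz]
    -- rank one
    have hspan : ∀ z : V ⧸ W, ∃ cc : K, cc • (Submodule.Quotient.mk v0 : V ⧸ W) = z := by
      intro z
      by_contra hzc; push_neg at hzc
      have hznot : z ∉ Submodule.span K {(Submodule.Quotient.mk v0 : V ⧸ W)} := by
        intro hmem
        obtain ⟨cc, hcc⟩ := Submodule.mem_span_singleton.mp hmem
        exact hzc cc hcc
      obtain ⟨ψ, hψker, hψz⟩ := exists_functional_s18 _ z hznot
      obtain ⟨v1, hv1⟩ : ∃ v1, (Submodule.Quotient.mk v1 : V ⧸ W) = z :=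
        Submodule.Quotient.mk_surjective W z
      obtain ⟨s0, hs0⟩ := hSne
      set c : V := v0 - ↑(π v0) with hc
      set f := Fmap W s0 π ψ c with hfd
      have hfmem := Fmap_mem hs0 π hπ ψ c
      obtain ⟨h, hhmem, h1, h2⟩ := creg_key hcr hfmem
      have hmkc : (Submodule.Quotient.mk c : V ⧸ W) = Submodule.Quotient.mk v0 := by
        rw [hc]
        rw [show (Submodule.Quotient.mk (v0 - ↑(π v0)) : V ⧸ W)
            = Submodule.Quotient.mk v0 - Submodule.Quotient.mk ↑(π v0) from rfl]
        rw [show (Submodule.Quotient.mk ↑(π v0) : V ⧸ W) = 0 from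
          (Submodule.Quotient.mk_eq_zero _).mpr (π v0).2]
        rw [sub_zero]
      have hft : f (v1 - ↑(π v1)) = c := by
        rw [hfd, Fmap_apply]
        have hπt : π (v1 - ↑(π v1)) = 0 := by rw [map_sub, hπ, sub_self]
        have hmk : (Submodule.Quotient.mk (v1 - ↑(π v1)) : V ⧸ W) = z := by
          rw [show (Submodule.Quotient.mk (v1 - ↑(π v1)) : V ⧸ W)
              = Submodule.Quotient.mk v1 - Submodule.Quotient.mk ↑(π v1) from rfl]
          rw [show (Submodule.Quotient.mk ↑(π v1) : V ⧸ W) = 0 from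
            (Submodule.Quotient.mk_eq_zero _).mpr (π v1).2]
          rw [sub_zero, hv1]
        rw [hπt, hmk, hψz, one_smul, map_zero]
        simp
      have hfc : f c = 0 := by
        rw [hfd, Fmap_apply]
        have hπc : π c = 0 := by rw [hc, map_sub, hπ, sub_self]
        have hψc : ψ (Submodule.Quotient.mk c) = 0 := by
          rw [hmkc]; exact hψker _ (Submodule.mem_span_singleton_self _)
        rw [hπc, hψc, zero_smul, map_zero]
        simp
      have hczero := key_zero h1 h2 (v1 - ↑(π v1)) (by rw [hft]; exact hfc)
      rw [hft] at hczero
      apply hx0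
      rw [← hmkc, hczero]
      exact Submodule.Quotient.mk_zero W
    have hrank : Module.rank K (V ⧸ W) = 1 := rank_eq_one _ hx0 hspan
    have hbijS : ∀ s ∈ S, Function.Bijective s := fun s hs => ⟨hinj s hs, hsurj s hs⟩
    have hidem_id : ∀ e ∈ S, e ∘ₗ e = e → e = LinearMap.id := by
      intro e heS hee
      ext w
      have h1 : e (e w) = e w := by
        have := LinearMap.ext_iff.mp hee w
        simpa using this
      exact congrArg Subtype.val ((hbijS e heS).1 h1)
    have hidS : LinearMap.id ∈ S := by
      obtain ⟨s0, hs0⟩ := hSne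
      obtain ⟨G, ⟨hGS, hGc, e, heG, hide, hinve⟩, -⟩ := hScr s0 hs0
      have he_id := hidem_id e (hGS heG) (hide e heG).1
      rw [← he_id]; exact hGS heG
    refine ⟨hrank, hS, hbijS, hidS, ?_⟩
    intro s hs
    obtain ⟨G, ⟨hGS, hGc, e, heG, hide, hinve⟩, hsG⟩ := hScr s hs
    have he_id : e = LinearMap.id := hidem_id e (hGS heG) (hide e heG).1
    obtain ⟨b, hbG, hb1, hb2⟩ := hinve s hsG
    exact ⟨b, hGS hbG, by rw [hb1, he_id], by rw [hb2, he_id]⟩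
  · rintro ⟨hScr, hcase⟩
    rcases hcase with hW | ⟨hrk, hAut⟩
    · -- case W = ⊤
      subst hW
      intro a ha
      obtain ⟨haW, hres⟩ := ha
      set π : V →ₗ[K] (⊤ : Submodule K V) :=
        LinearMap.codRestrict ⊤ LinearMap.id (fun _ => Submodule.mem_top) with hπd
      have hπ : ∀ w : (⊤ : Submodule K V), π ↑w = w := fun w => Subtype.ext rfl
      obtain ⟨G, hGgrp, htG⟩ := hScr _ hres
      refine ⟨_, lift_group π hπ hGgrp, ⟨a.restrict haW, htG, ?_⟩⟩
      ext x
      rfl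
    · -- case codim 1 and S a subgroup of Aut(W)
      obtain ⟨hSsub, hbijS, hidS, hinvS⟩ := hAut
      intro a ha
      obtain ⟨haW, hres⟩ := ha
      by_cases hrange : ∀ x, a x ∈ W
      · -- a maps V into W
        have hdis : Disjoint W (LinearMap.ker a) := by
          rw [Submodule.disjoint_def]
          intro x hxW hxk
          have hx0 : a.restrict haW ⟨x, hxW⟩ = 0 := by
            apply Subtype.ext
            show a x = ↑(0 : W)
            rw [LinearMap.mem_ker.mp hxk]; rfl
          have h2 := (hbijS _ hres).1
            (show a.restrict haW ⟨x, hxW⟩ = a.restrict haW 0 by rw [hx0, map_zero])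
          simpa using congrArg Subtype.val h2
        have hcodis : Codisjoint W (LinearMap.ker a) := by
          rw [codisjoint_iff, Submodule.eq_top_iff']
          intro x
          obtain ⟨w, hw⟩ := (hbijS _ hres).2 ⟨a x, hrange x⟩
          apply Submodule.mem_sup.mpr
          refine ⟨↑w, w.2, x - ↑w, ?_, by abel⟩
          rw [LinearMap.mem_ker, map_sub]
          have haw : a ↑w = a x := by
            have := congrArg Subtype.val hw
            simpa [restrict_coe] using this
          rw [haw, sub_self]
        have hcompl : IsCompl W (LinearMap.ker a) := ⟨hdis, hcodis⟩
        set π' := W.projectionOnto _ hcompl with hπ'd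
        have hπ' : ∀ w : W, π' ↑w = w :=
          fun w => Submodule.projectionOnto_apply_left hcompl w
        have hSS : LIsSubgroupIn S S :=
          ⟨subset_rfl, fun p hp q hq => hSsub p hp q hq,
            LinearMap.id, hidS,
            fun t _ => ⟨LinearMap.comp_id t, LinearMap.id_comp t⟩, hinvS⟩
        refine ⟨_, lift_group π' hπ' hSS, ⟨a.restrict haW, hres, ?_⟩⟩
        ext x
        show ↑(a.restrict haW (π' x)) = a x
        have hker : x - ↑(π' x) ∈ LinearMap.ker a := by
          rw [← Submodule.projectionOnto_apply_eq_zero_iff hcompl,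
            map_sub, hπ', sub_self]
        have hax : a x = a ↑(π' x) := by
          have hk := LinearMap.mem_ker.mp hker
          rw [map_sub, sub_eq_zero] at hk
          exact hk
        rw [hax]; rfl
      · -- a does not map V into W : a is bijective
        push_neg at hrange
        obtain ⟨x0, hx0⟩ := hrange
        have hx0W : x0 ∉ W := fun hmem => hx0 (haW x0 hmem)
        have hqx0 : (Submodule.Quotient.mk x0 : V ⧸ W) ≠ 0 := by
          simpa [Submodule.Quotient.mk_eq_zero] using hx0W
        have hqax0 : (Submodule.Quotient.mk (a x0) : V ⧸ W) ≠ 0 := by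
          simpa [Submodule.Quotient.mk_eq_zero] using hx0
        have lemA : ∀ z, a z ∈ W → z ∈ W := by
          intro z hz
          obtain ⟨cc, hcc⟩ := span_of_rank_one hrk hqx0 (Submodule.Quotient.mk z)
          have hzw : z - cc • x0 ∈ W := by
            rw [← Submodule.Quotient.mk_eq_zero]
            rw [show (Submodule.Quotient.mk (z - cc • x0) : V ⧸ W)
                = Submodule.Quotient.mk z - cc • Submodule.Quotient.mk x0 from rfl]
            rw [hcc, sub_self]
          have ha2 : a z - cc • a x0 ∈ W := by
            have := haW _ hzw
            rwa [map_sub, map_smul] at this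
          have hccw : cc • a x0 ∈ W := by
            have := W.sub_mem hz ha2
            simpa using this
          have hcc0 : cc = 0 := by
            by_contra hcc0
            apply hx0
            have := W.smul_mem cc⁻¹ hccw
            rwa [smul_smul, inv_mul_cancel₀ hcc0, one_smul] at this
          rw [hcc0, zero_smul] at hcc
          rw [← Submodule.Quotient.mk_eq_zero]
          exact hcc
        have hainj : Function.Injective a := by
          suffices h0 : ∀ z, a z = 0 → z = 0 by
            intro u v huv
            have h1 : a (u - v) = 0 := by rw [map_sub, huv, sub_self]
            have := h0 _ h1; rwa [sub_eq_zero] at this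
          intro z hz
          have hzW : z ∈ W := lemA z (by rw [hz]; exact W.zero_mem)
          have hs0 : a.restrict haW ⟨z, hzW⟩ = 0 := by
            apply Subtype.ext
            show a z = ↑(0 : W)
            rw [hz]; rfl
          have h2 := (hbijS _ hres).1
            (show a.restrict haW ⟨z, hzW⟩ = a.restrict haW 0 by rw [hs0, map_zero])
          simpa using congrArg Subtype.val h2
        have hasurj : Function.Surjective a := by
          intro y
          obtain ⟨cc, hcc⟩ := span_of_rank_one hrk hqax0 (Submodule.Quotient.mk y)
          have hyw : y - cc • a x0 ∈ W := by
            rw [← Submodule.Quotient.mk_eq_zero]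
            rw [show (Submodule.Quotient.mk (y - cc • a x0) : V ⧸ W)
                = Submodule.Quotient.mk y - cc • Submodule.Quotient.mk (a x0) from rfl]
            rw [hcc, sub_self]
          obtain ⟨w, hw⟩ := (hbijS _ hres).2 ⟨y - cc • a x0, hyw⟩
          refine ⟨cc • x0 + ↑w, ?_⟩
          rw [map_add, map_smul]
          have haw : a ↑w = y - cc • a x0 := by
            have := congrArg Subtype.val hw
            simpa [restrict_coe] using this
          rw [haw]; abel
        -- the group of invertible elements of LSemi W S
        set Gb : Set (V →ₗ[K] V) := {f | f ∈ LSemi W S ∧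
          ∃ g, g ∈ LSemi W S ∧ f ∘ₗ g = LinearMap.id ∧ g ∘ₗ f = LinearMap.id} with hGbd
        have hGb : LIsSubgroupIn (LSemi W S) Gb := by
          refine ⟨fun f hf => hf.1, ?_, ?_⟩
          · rintro f ⟨hfT, g, hgT, hfg, hgf⟩ f' ⟨hf'T, g', hg'T, hfg', hgf'⟩
            refine ⟨LSemi_comp hS hfT hf'T, g' ∘ₗ g, LSemi_comp hS hg'T hgT, ?_, ?_⟩
            · ext x
              have e1 := LinearMap.ext_iff.mp hfg' (g x)
              have e2 := LinearMap.ext_iff.mp hfg x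
              simp only [LinearMap.comp_apply, LinearMap.id_apply] at e1 e2 ⊢
              rw [e1, e2]
            · ext x
              have e1 := LinearMap.ext_iff.mp hgf (f' x)
              have e2 := LinearMap.ext_iff.mp hgf' x
              simp only [LinearMap.comp_apply, LinearMap.id_apply] at e1 e2 ⊢
              rw [e1, e2]
          · refine ⟨LinearMap.id, ⟨LSemi_id hidS, LinearMap.id, LSemi_id hidS,
              LinearMap.id_comp _, LinearMap.id_comp _⟩, ?_, ?_⟩
            · rintro f ⟨hfT, -⟩
              exact ⟨LinearMap.comp_id f, LinearMap.id_comp f⟩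
            · rintro f ⟨hfT, g, hgT, hfg, hgf⟩
              exact ⟨g, ⟨hgT, f, hfT, hgf, hfg⟩, hfg, hgf⟩
        set aeq := LinearEquiv.ofBijective a ⟨hainj, hasurj⟩ with haeqd
        set g : V →ₗ[K] V := aeq.symm.toLinearMap with hgd
        have hg1 : a ∘ₗ g = LinearMap.id := by
          ext x
          show a (aeq.symm x) = x
          exact aeq.apply_symm_apply x
        have hg2 : g ∘ₗ a = LinearMap.id := by
          ext x
          show aeq.symm (a x) = x
          exact aeq.symm_apply_apply x
        have hgW : ∀ x ∈ W, g x ∈ W := by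
          intro x hx
          apply lemA
          have hgx : a (g x) = x := by
            have := LinearMap.ext_iff.mp hg1 x
            simpa using this
          rwa [hgx]
        have hgres : g.restrict hgW ∈ S := by
          obtain ⟨b, hbS, hb1, hb2⟩ := hinvS _ hres
          have hsg : (a.restrict haW) ∘ₗ g.restrict hgW = LinearMap.id := by
            ext w
            show a (g ↑w) = ↑w
            have := LinearMap.ext_iff.mp hg1 (↑w : V)
            simpa using this
          have hgb : g.restrict hgW = b := by
            calc g.restrict hgW = LinearMap.id ∘ₗ g.restrict hgW :=
                  (LinearMap.id_comp _).symm
              _ = (b ∘ₗ a.restrict haW) ∘ₗ g.restrict hgW := by rw [hb2]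
              _ = b ∘ₗ ((a.restrict haW) ∘ₗ g.restrict hgW) := by
                  rw [LinearMap.comp_assoc]
              _ = b := by rw [hsg, LinearMap.comp_id]
          rw [hgb]; exact hbS
        exact ⟨Gb, hGb, ⟨⟨haW, hres⟩, g, ⟨hgW, hgres⟩, hg1, hg2⟩⟩
end

section
/- Let V be a vector space over a field. The semigroup L(V) of all linear self-maps of V under composition is completely regular if and only if dim(V) ≤ 1. -/
open Set

theorem stmt19 {K V : Type*} [Field K] [AddCommGroup V] [Module K V] :
    LIsCompletelyRegularOn (Set.univ : Set (V →ₗ[K] V)) ↔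
      Module.rank K V ≤ 1 := by
  constructor
  · intro hcr
    by_contra hrank
    -- get a basis and two distinct indices
    set B := Module.Basis.ofVectorSpace K V
    have hι : Nontrivial (Module.Basis.ofVectorSpaceIndex K V) := by
      rw [← Cardinal.one_lt_iff_nontrivial]
      by_contra h
      push_neg at h
      rw [← B.mk_eq_rank''] at hrank
      exact hrank h
    obtain ⟨i, j, hij⟩ := hι.exists_pair_ne
    set a : V →ₗ[K] V := (B.coord j).smulRight (B i) with ha
    have haj : a (B j) = B i := by
      simp [ha, Module.Basis.coord_apply, Module.Basis.repr_self]
    have hsq : a ∘ₗ a = 0 := by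
      ext x
      simp only [LinearMap.comp_apply, ha, LinearMap.smulRight_apply, LinearMap.zero_apply,
        map_smul, smul_eq_mul]
      have : (B.coord j) (B i) = 0 := by
        simp [Module.Basis.coord_apply, Module.Basis.repr_self, Finsupp.single_apply, hij]
      rw [this]
      simp
    obtain ⟨G, ⟨_, hclosed, e, heG, hid, hinv⟩, haG⟩ := hcr a (mem_univ a)
    obtain ⟨b, hbG, hab, hba⟩ := hinv a haG
    have he0 : e = 0 := by
      have h1 : e ∘ₗ e = e := (hid e heG).1
      have h2 : e ∘ₗ e = (b ∘ₗ a) ∘ₗ (a ∘ₗ b) := by rw [hab, hba]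
      have h3 : (b ∘ₗ a) ∘ₗ (a ∘ₗ b) = b ∘ₗ (a ∘ₗ a) ∘ₗ b := by
        simp only [LinearMap.comp_assoc]
      rw [h1, h3, hsq] at h2
      simp at h2
      exact h2
    have ha0 : a = 0 := by
      have := (hid a haG).1
      rw [he0] at this
      simpa using this.symm
    rw [ha0] at haj
    simp at haj
    exact B.ne_zero i haj.symm
  · intro hrank a _
    by_cases ha : a = 0
    · refine ⟨{0}, ⟨subset_univ _, ?_, 0, rfl, ?_, ?_⟩, by simp [ha]⟩
      · rintro x rfl y rfl; simp
      · rintro x rfl; simp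
      · rintro x rfl; exact ⟨0, rfl, by simp⟩
    · -- a is bijective
      obtain ⟨v₀, hv₀⟩ := rank_le_one_iff.mp hrank
      have hav₀ : a v₀ ≠ 0 := by
        intro h
        apply ha
        ext w
        obtain ⟨r, rfl⟩ := hv₀ w
        simp [map_smul, h]
      have hbij : Function.Bijective a := by
        constructor
        · rw [← LinearMap.ker_eq_bot, eq_bot_iff]
          intro w hw
          obtain ⟨r, rfl⟩ := hv₀ w
          simp only [LinearMap.mem_ker, map_smul] at hw
          rcases smul_eq_zero.mp hw with h | h
          · simp [h]
          · exact absurd h hav₀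
        · intro w
          obtain ⟨r, hw⟩ := hv₀ w
          obtain ⟨r₀, hr₀⟩ := hv₀ (a v₀)
          have hr₀0 : r₀ ≠ 0 := by
            rintro rfl; rw [zero_smul] at hr₀; exact hav₀ hr₀.symm
          refine ⟨(r / r₀) • v₀, ?_⟩
          rw [map_smul, ← hr₀, smul_smul, div_mul_cancel₀ _ hr₀0, hw]
      refine ⟨{f | Function.Bijective f}, ⟨subset_univ _, ?_, LinearMap.id, ?_, ?_, ?_⟩, hbij⟩
      · intro f hf g hg; exact hf.comp hg
      · exact Function.bijective_id
      · intro f _; constructor <;> ext x <;> simp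
      · intro f hf
        set E := LinearEquiv.ofBijective f hf
        refine ⟨E.symm.toLinearMap, E.symm.bijective, ?_, ?_⟩
        · ext x
          exact E.apply_symm_apply x
        · ext x
          exact E.symm_apply_apply x
end
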